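/- For a TFG element χ = (R,v,p,b^a,b^ω), conjugation g ↦ χ • g • χ⁻¹ is a group automorphism of the TFG (with gyroscope bias extension), and its differential at the identity is given by the block matrix Ad_χ whose diagonal blocks are all R and whose first block column is (R; (v)× R; (p)× R; R(b^a)×; R(b^ω)×), all other blocks zero. -/

import Mathlib

open Matrix

noncomputable section

abbrev V3 := Fin 3 → ℝ
abbrev M3 := Matrix (Fin 3) (Fin 3) ℝ

/-- The skew-symmetric cross-product matrix `(ξ)×`. -/
def skew (ξ : V3) : M3 :=
  !![0, -ξ 2, ξ 1; ξ 2, 0, -ξ 0; -ξ 1, ξ 0, 0]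

/-- The Euclidean norm of a vector of `ℝ³`. -/
def nrm (ξ : V3) : ℝ := Real.sqrt (ξ 0 ^ 2 + ξ 1 ^ 2 + ξ 2 ^ 2)

/-- The left Jacobian of SO(3):
`ν(ξ) = I + ((1−cos‖ξ‖)/‖ξ‖²)(ξ)× + ((‖ξ‖−sin‖ξ‖)/‖ξ‖³)(ξ)ײ`. -/
def nu (ξ : V3) : M3 :=
  1 + ((1 - Real.cos (nrm ξ)) / nrm ξ ^ 2) • skew ξ
    + ((nrm ξ - Real.sin (nrm ξ)) / nrm ξ ^ 3) • (skew ξ * skew ξ)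

/-- `R` is a rotation matrix: orthogonal with determinant one. -/
def IsSO3 (R : M3) : Prop := R * Rᵀ = 1 ∧ R.det = 1

/-- An element of the TFG with gyroscope bias: `(R, v, p, b^a, b^ω)`. -/
abbrev TFG5 := M3 × V3 × V3 × V3 × V3

/-- The TFG composition law with gyroscope bias. -/
def mul5 (x y : TFG5) : TFG5 :=
  (x.1 * y.1, x.2.1 + x.1 *ᵥ y.2.1, x.2.2.1 + x.1 *ᵥ y.2.2.1,
    y.2.2.2.1 + y.1ᵀ *ᵥ x.2.2.2.1, y.2.2.2.2 + y.1ᵀ *ᵥ x.2.2.2.2)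

/-- The TFG inverse with gyroscope bias. -/
def inv5 (x : TFG5) : TFG5 :=
  (x.1ᵀ, -(x.1ᵀ *ᵥ x.2.1), -(x.1ᵀ *ᵥ x.2.2.1),
    -(x.1 *ᵥ x.2.2.2.1), -(x.1 *ᵥ x.2.2.2.2))

/-- Conjugation `g ↦ χ • g • χ⁻¹` in the TFG with gyroscope bias. -/
def conj5 (χ g : TFG5) : TFG5 := mul5 (mul5 χ g) (inv5 χ)

/-- The TFG exponential with gyroscope bias. -/
def exp5 (ξ : V3 × V3 × V3 × V3 × V3) : TFG5 :=
  (NormedSpace.exp (skew ξ.1), nu ξ.1 *ᵥ ξ.2.1, nu ξ.1 *ᵥ ξ.2.2.1,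
    nu (-ξ.1) *ᵥ ξ.2.2.2.1, nu (-ξ.1) *ᵥ ξ.2.2.2.2)

/-! ### Auxiliary lemmas -/

section ExpDeriv
attribute [local instance] Matrix.linftyOpNormedAddCommGroup Matrix.linftyOpNormedRing
  Matrix.linftyOpNormedAlgebra

lemma exp_entry_deriv (M : M3) (i j : Fin 3) :
    HasDerivAt (fun t : ℝ => (NormedSpace.exp (t • M)) i j) (M i j) 0 := by
  have h := hasDerivAt_exp_smul_const (𝕂 := ℝ) M 0
  rw [zero_smul, NormedSpace.exp_zero, one_mul] at h
  let e : M3 →ₗ[ℝ] ℝ :=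
    { toFun := fun A => A i j, map_add' := fun _ _ => rfl, map_smul' := fun _ _ => rfl }
  have := (e.toContinuousLinearMap.hasFDerivAt.comp_hasDerivAt 0 h)
  exact this

end ExpDeriv

lemma nrm_nonneg (ξ : V3) : 0 ≤ nrm ξ := Real.sqrt_nonneg _

lemma nrm_smul (t : ℝ) (ζ : V3) : nrm (t • ζ) = |t| * nrm ζ := by
  unfold nrm
  rw [show ((t • ζ) 0 ^ 2 + (t • ζ) 1 ^ 2 + (t • ζ) 2 ^ 2)
      = t ^ 2 * (ζ 0 ^ 2 + ζ 1 ^ 2 + ζ 2 ^ 2) by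
    simp [Pi.smul_apply, smul_eq_mul]
    ring_nf]
  rw [Real.sqrt_mul (sq_nonneg t), Real.sqrt_sq_eq_abs]

lemma skew_smul (t : ℝ) (ζ : V3) : skew (t • ζ) = t • skew ζ := by
  ext i j
  fin_cases i <;> fin_cases j <;> simp [skew] <;> ring

lemma c1lim (r : ℝ) (hr : 0 ≤ r) :
    Filter.Tendsto (fun t : ℝ => t * ((1 - Real.cos (|t| * r)) / (|t| * r) ^ 2))
      (nhds 0) (nhds 0) := by
  apply squeeze_zero_norm (a := fun t : ℝ => |t| / 2)
  · intro t
    rcases eq_or_lt_of_le hr with h | h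
    · simp [← h]
      positivity
    rcases eq_or_ne t 0 with rfl | ht
    · simp
    have hx : 0 < |t| * r := by positivity
    have h1 : 0 ≤ 1 - Real.cos (|t| * r) := by
      have := Real.cos_le_one (|t| * r); linarith
    have h2 : 1 - Real.cos (|t| * r) ≤ (|t| * r) ^ 2 / 2 := by
      have := Real.one_sub_sq_div_two_le_cos (x := |t| * r); linarith
    rw [Real.norm_eq_abs, abs_mul, abs_div, abs_of_nonneg h1,
      abs_of_nonneg (by positivity : (0:ℝ) ≤ (|t| * r) ^ 2)]
    have hq : (1 - Real.cos (|t| * r)) / (|t| * r) ^ 2 ≤ 1 / 2 := by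
      rw [div_le_div_iff₀ (by positivity) (by norm_num)]
      nlinarith
    calc |t| * ((1 - Real.cos (|t| * r)) / (|t| * r) ^ 2) ≤ |t| * (1 / 2) :=
          mul_le_mul_of_nonneg_left hq (abs_nonneg t)
      _ = |t| / 2 := by ring
  · have : Filter.Tendsto (fun t : ℝ => |t| / 2) (nhds 0) (nhds (|(0:ℝ)| / 2)) :=
      ((continuous_abs.tendsto 0).div_const 2)
    simpa using this

lemma c2lim (r : ℝ) (hr : 0 ≤ r) :
    Filter.Tendsto (fun t : ℝ => t ^ 2 * ((|t| * r - Real.sin (|t| * r)) / (|t| * r) ^ 3))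
      (nhds 0) (nhds 0) := by
  apply squeeze_zero_norm' (a := fun t : ℝ => t ^ 2 / 4)
  · have hev : ∀ᶠ t : ℝ in nhds 0, |t - 0| < (r + 1)⁻¹ :=
      eventually_abs_sub_lt 0 (by positivity)
    filter_upwards [hev] with t ht
    set x := |t| * r with hxdef
    have hx0 : 0 ≤ x := by positivity
    rcases eq_or_lt_of_le hx0 with h | h
    · simp [← h, Real.sin_zero]
      positivity
    have hx1 : x ≤ 1 := by
      rw [sub_zero] at ht
      have : |t| * r ≤ |t| * (r + 1) := by nlinarith [abs_nonneg t]
      have h2 : |t| * (r + 1) < (r+1)⁻¹ * (r+1) := by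
        apply mul_lt_mul_of_pos_right ht (by positivity)
      rw [inv_mul_cancel₀ (by positivity)] at h2
      linarith
    have h1 : 0 ≤ x - Real.sin x := by
      have := Real.sin_le hx0
      linarith
    have h2 : x - Real.sin x ≤ x ^ 3 / 4 := by
      have := Real.sin_gt_sub_cube h
      nlinarith [pow_nonneg hx0 3]
    have hq0 : 0 ≤ (x - Real.sin x) / x ^ 3 := div_nonneg h1 (by positivity)
    have hq : (x - Real.sin x) / x ^ 3 ≤ 1 / 4 := by
      rw [div_le_div_iff₀ (by positivity) (by norm_num)]
      nlinarith
    rw [Real.norm_eq_abs,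
      abs_of_nonneg (by positivity : (0:ℝ) ≤ t ^ 2 * ((x - Real.sin x) / x ^ 3))]
    calc t ^ 2 * ((x - Real.sin x) / x ^ 3) ≤ t ^ 2 * (1 / 4) :=
          mul_le_mul_of_nonneg_left hq (by positivity)
      _ = t ^ 2 / 4 := by ring
  · have : Filter.Tendsto (fun t : ℝ => t ^ 2 / 4) (nhds 0) (nhds ((0:ℝ) ^ 2 / 4)) :=
      (((continuous_pow 2).tendsto (0:ℝ)).div_const 4)
    simpa using this

lemma tendsto_nuVec (ζ b : V3) :
    Filter.Tendsto (fun t : ℝ => nu (t • ζ) *ᵥ b) (nhds 0) (nhds b) := by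
  have hrw : ∀ t : ℝ, nu (t • ζ) *ᵥ b
      = b + (t * ((1 - Real.cos (|t| * nrm ζ)) / (|t| * nrm ζ) ^ 2)) • (skew ζ *ᵥ b)
          + (t ^ 2 * ((|t| * nrm ζ - Real.sin (|t| * nrm ζ)) / (|t| * nrm ζ) ^ 3))
            • ((skew ζ * skew ζ) *ᵥ b) := by
    intro t
    rw [nu, nrm_smul, skew_smul]
    rw [Matrix.add_mulVec, Matrix.add_mulVec, Matrix.one_mulVec]
    congr 1
    · congr 1
      rw [Matrix.smul_mulVec, Matrix.smul_mulVec, smul_smul]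
      congr 1
      ring
    · rw [Matrix.smul_mulVec]
      rw [show (t • skew ζ) * (t • skew ζ) = (t ^ 2) • (skew ζ * skew ζ) by
        rw [Matrix.smul_mul, Matrix.mul_smul, smul_smul]; ring_nf]
      rw [Matrix.smul_mulVec, smul_smul]
      congr 1
      ring
  simp only [hrw]
  have h1 := (c1lim (nrm ζ) (nrm_nonneg ζ)).smul_const (skew ζ *ᵥ b)
  have h2 := (c2lim (nrm ζ) (nrm_nonneg ζ)).smul_const ((skew ζ * skew ζ) *ᵥ b)
  have := (tendsto_const_nhds (x := b) (f := nhds (0:ℝ))).add (h1.add h2)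
  simpa [add_assoc] using this

lemma hasDerivAt_nuVec (ζ b : V3) :
    HasDerivAt (fun t : ℝ => nu (t • ζ) *ᵥ (t • b)) b 0 := by
  rw [hasDerivAt_iff_tendsto_slope]
  have key : Filter.Tendsto (fun t : ℝ => nu (t • ζ) *ᵥ b) (nhdsWithin 0 {(0:ℝ)}ᶜ) (nhds b) :=
    (tendsto_nuVec ζ b).mono_left nhdsWithin_le_nhds
  refine key.congr' ?_
  filter_upwards [self_mem_nhdsWithin] with t ht
  have ht' : t ≠ 0 := ht
  rw [slope_def_module]
  rw [show nu ((0:ℝ) • ζ) *ᵥ ((0:ℝ) • b) = 0 by simp [Matrix.mulVec_zero]]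
  rw [show nu (t • ζ) *ᵥ (t • b) = t • (nu (t • ζ) *ᵥ b) from Matrix.mulVec_smul _ _ _]
  rw [sub_zero, sub_zero, smul_smul, inv_mul_cancel₀ ht', one_smul]

lemma skewT_mulVec (x y : V3) : (skew x)ᵀ *ᵥ y = skew y *ᵥ x := by
  funext i
  fin_cases i <;>
    simp [skew, Matrix.mulVec, dotProduct, Fin.sum_univ_three,
      Matrix.transpose_apply] <;> ring

lemma skew_transpose (x : V3) : (skew x)ᵀ = -skew x := by
  ext i j; fin_cases i <;> fin_cases j <;> simp [skew]

lemma det_skew_conj (A : M3) (x : V3) : Aᵀ * skew (A *ᵥ x) * A = A.det • skew x := by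
  ext i j
  fin_cases i <;> fin_cases j <;>
    simp [Matrix.mul_apply, Matrix.mulVec, dotProduct, skew, Fin.sum_univ_three,
      Matrix.det_fin_three, Matrix.smul_apply, Matrix.transpose_apply, smul_eq_mul] <;> ring

lemma skew_rot {R : M3} (h : IsSO3 R) (x : V3) : R * skew x * Rᵀ = skew (R *ᵥ x) := by
  have key := det_skew_conj R x
  rw [h.2, one_smul] at key
  calc R * skew x * Rᵀ = R * (Rᵀ * skew (R *ᵥ x) * R) * Rᵀ := by rw [key]
    _ = R * Rᵀ * skew (R *ᵥ x) * (R * Rᵀ) := by simp only [Matrix.mul_assoc]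
    _ = skew (R *ᵥ x) := by rw [h.1, one_mul, Matrix.mul_one]

lemma hasDerivAt_mulVec_comp {A : M3} {f : ℝ → V3} {f' : V3} {t : ℝ}
    (hf : ∀ i, HasDerivAt (fun s => f s i) (f' i) t) (i : Fin 3) :
    HasDerivAt (fun s => (A *ᵥ f s) i) ((A *ᵥ f') i) t := by
  simpa [Matrix.mulVec, dotProduct] using
    HasDerivAt.fun_sum (fun j _ => (hf j).const_mul (A i j))

lemma entry_lmul_deriv {Q : ℝ → M3} {M : M3}
    (hq : ∀ k l, HasDerivAt (fun t => Q t k l) (M k l) 0) (R : M3) (i j : Fin 3) :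
    HasDerivAt (fun t => (R * Q t) i j) ((R * M) i j) 0 := by
  simpa [Matrix.mul_apply] using
    HasDerivAt.fun_sum (fun k _ => (hq k j).const_mul (R i k))

lemma entry_conj_deriv {Q : ℝ → M3} {M : M3}
    (hq : ∀ k l, HasDerivAt (fun t => Q t k l) (M k l) 0) (R S : M3) (i j : Fin 3) :
    HasDerivAt (fun t => (R * Q t * S) i j) ((R * M * S) i j) 0 := by
  simpa [Matrix.mul_apply] using
    HasDerivAt.fun_sum (fun l _ =>
      (HasDerivAt.fun_sum (fun k _ => (hq k l).const_mul (R i k))).mul_const (S l j))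

lemma mulVec_const_deriv {P : ℝ → M3} {M : M3}
    (hp : ∀ i j, HasDerivAt (fun t => P t i j) (M i j) 0) (c : V3) (i : Fin 3) :
    HasDerivAt (fun t => (P t *ᵥ c) i) ((M *ᵥ c) i) 0 := by
  simpa [Matrix.mulVec, dotProduct] using
    HasDerivAt.fun_sum (fun j _ => (hp i j).mul_const (c j))

/-- For a TFG element `χ = (R,v,p,b^a,b^ω)`, conjugation `g ↦ χ • g • χ⁻¹` is a
group automorphism of the TFG with gyroscope bias, and its differential at the
identity (tangent directions parametrized through `exp`) is the block matrix
`Ad_χ` with diagonal blocks `R` and first block column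
`(R; (v)× R; (p)× R; R (b^a)×; R (b^ω)×)`, all other blocks zero. -/
theorem conj5_automorphism_and_differential (χ : TFG5) (hχ : IsSO3 χ.1) :
    (Function.Bijective (conj5 χ) ∧
      ∀ g h : TFG5, conj5 χ (mul5 g h) = mul5 (conj5 χ g) (conj5 χ h)) ∧
    ∀ ξ : V3 × V3 × V3 × V3 × V3,
      (∀ i j : Fin 3, HasDerivAt (fun t : ℝ => (conj5 χ (exp5 (t • ξ))).1 i j)
        (skew (χ.1 *ᵥ ξ.1) i j) 0) ∧
      HasDerivAt (fun t : ℝ => (conj5 χ (exp5 (t • ξ))).2.1)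
        (skew χ.2.1 *ᵥ (χ.1 *ᵥ ξ.1) + χ.1 *ᵥ ξ.2.1) 0 ∧
      HasDerivAt (fun t : ℝ => (conj5 χ (exp5 (t • ξ))).2.2.1)
        (skew χ.2.2.1 *ᵥ (χ.1 *ᵥ ξ.1) + χ.1 *ᵥ ξ.2.2.1) 0 ∧
      HasDerivAt (fun t : ℝ => (conj5 χ (exp5 (t • ξ))).2.2.2.1)
        (χ.1 *ᵥ (skew χ.2.2.2.1 *ᵥ ξ.1) + χ.1 *ᵥ ξ.2.2.2.1) 0 ∧
      HasDerivAt (fun t : ℝ => (conj5 χ (exp5 (t • ξ))).2.2.2.2)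
        (χ.1 *ᵥ (skew χ.2.2.2.2 *ᵥ ξ.1) + χ.1 *ᵥ ξ.2.2.2.2) 0 := by
  obtain ⟨hRRt, hdet⟩ := hχ
  have hRtR : χ.1ᵀ * χ.1 = 1 := mul_eq_one_comm.mp hRRt
  -- group facts
  have hassoc : ∀ x y z : TFG5, mul5 (mul5 x y) z = mul5 x (mul5 y z) := by
    intro x y z
    simp [mul5, Prod.ext_iff, Matrix.mulVec_add, Matrix.mulVec_mulVec,
      Matrix.transpose_mul, Matrix.mul_assoc, add_assoc]
  have hid_l : ∀ x : TFG5, mul5 ((1:M3), (0:V3), (0:V3), (0:V3), (0:V3)) x = x := by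
    intro x
    simp [mul5, Prod.ext_iff, Matrix.one_mulVec, Matrix.mulVec_zero]
  have hid_r : ∀ x : TFG5, mul5 x ((1:M3), (0:V3), (0:V3), (0:V3), (0:V3)) = x := by
    intro x
    simp [mul5, Prod.ext_iff, Matrix.one_mulVec, Matrix.mulVec_zero]
  have hL : mul5 (inv5 χ) χ = ((1:M3), (0:V3), (0:V3), (0:V3), (0:V3)) := by
    simp [mul5, inv5, Prod.ext_iff, hRtR, hRRt, Matrix.mulVec_neg, Matrix.mulVec_mulVec,
      Matrix.one_mulVec]
  have hR : mul5 χ (inv5 χ) = ((1:M3), (0:V3), (0:V3), (0:V3), (0:V3)) := by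
    simp [mul5, inv5, Prod.ext_iff, hRtR, hRRt, Matrix.mulVec_neg, Matrix.mulVec_mulVec,
      Matrix.one_mulVec, Matrix.transpose_transpose]
  have hinv_inv : inv5 (inv5 χ) = χ := by
    simp [inv5, Prod.ext_iff, Matrix.transpose_transpose, Matrix.mulVec_neg,
      Matrix.mulVec_mulVec, hRRt, hRtR, Matrix.one_mulVec]
  have hcl : ∀ y : TFG5, mul5 (inv5 χ) (mul5 χ y) = y := by
    intro y; rw [← hassoc, hL, hid_l]
  have hcr : ∀ y : TFG5, mul5 χ (mul5 (inv5 χ) y) = y := by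
    intro y; rw [← hassoc, hR, hid_l]
  refine ⟨⟨?_, ?_⟩, ?_⟩
  · -- bijective
    rw [Function.bijective_iff_has_inverse]
    refine ⟨conj5 (inv5 χ), ?_, ?_⟩
    · intro x
      show conj5 (inv5 χ) (conj5 χ x) = x
      unfold conj5
      rw [hinv_inv, hassoc, hassoc, hL, hid_r, hcl]
    · intro x
      show conj5 χ (conj5 (inv5 χ) x) = x
      unfold conj5
      rw [hinv_inv, hassoc, hassoc, hR, hid_r, hcr]
  · -- homomorphism
    intro g h
    simp only [conj5, hassoc, hcl]
  · -- differential
    intro ξ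
    have hq : ∀ k l : Fin 3, HasDerivAt
        (fun t : ℝ => (NormedSpace.exp (skew (t • ξ.1))) k l) (skew ξ.1 k l) 0 := by
      intro k l
      have := exp_entry_deriv (skew ξ.1) k l
      simpa only [← skew_smul] using this
    have hqT : ∀ k l : Fin 3, HasDerivAt
        (fun t : ℝ => (NormedSpace.exp (skew (t • ξ.1)))ᵀ k l) ((skew ξ.1)ᵀ k l) 0 := by
      intro k l
      exact hq l k
    refine ⟨?_, ?_, ?_, ?_, ?_⟩
    · -- rotation block
      intro i j
      rw [show skew (χ.1 *ᵥ ξ.1) = χ.1 * skew ξ.1 * χ.1ᵀ from (skew_rot ⟨hRRt, hdet⟩ ξ.1).symm]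
      exact entry_conj_deriv hq χ.1 χ.1ᵀ i j
    · -- v block
      have hu := hasDerivAt_pi.mp (hasDerivAt_nuVec ξ.1 ξ.2.1)
      have hvec : skew χ.2.1 *ᵥ (χ.1 *ᵥ ξ.1)
          = (χ.1 * skew ξ.1) *ᵥ (-(χ.1ᵀ *ᵥ χ.2.1)) := by
        rw [← skewT_mulVec, skew_transpose, Matrix.neg_mulVec, Matrix.mulVec_neg,
          Matrix.mulVec_mulVec, skew_rot ⟨hRRt, hdet⟩]
      rw [hvec]
      refine hasDerivAt_pi.mpr fun i => ?_
      have h1 := hasDerivAt_mulVec_comp (A := χ.1) hu i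
      have h2 := mulVec_const_deriv (M := χ.1 * skew ξ.1)
        (fun i j => entry_lmul_deriv hq χ.1 i j) (-(χ.1ᵀ *ᵥ χ.2.1)) i
      have hb := ((hasDerivAt_const (0:ℝ) (χ.2.1 i)).fun_add h1).fun_add h2
      convert hb using 1
      · rfl
      simp only [Pi.add_apply]
      ring
    · -- p block
      have hu := hasDerivAt_pi.mp (hasDerivAt_nuVec ξ.1 ξ.2.2.1)
      have hvec : skew χ.2.2.1 *ᵥ (χ.1 *ᵥ ξ.1)
          = (χ.1 * skew ξ.1) *ᵥ (-(χ.1ᵀ *ᵥ χ.2.2.1)) := by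
        rw [← skewT_mulVec, skew_transpose, Matrix.neg_mulVec, Matrix.mulVec_neg,
          Matrix.mulVec_mulVec, skew_rot ⟨hRRt, hdet⟩]
      rw [hvec]
      refine hasDerivAt_pi.mpr fun i => ?_
      have h1 := hasDerivAt_mulVec_comp (A := χ.1) hu i
      have h2 := mulVec_const_deriv (M := χ.1 * skew ξ.1)
        (fun i j => entry_lmul_deriv hq χ.1 i j) (-(χ.1ᵀ *ᵥ χ.2.2.1)) i
      have hb := ((hasDerivAt_const (0:ℝ) (χ.2.2.1 i)).fun_add h1).fun_add h2
      convert hb using 1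
      · rfl
      simp only [Pi.add_apply]
      ring
    · -- b^a block
      have hceq : (fun t : ℝ => nu (-(t • ξ.1)) *ᵥ (t • ξ.2.2.2.1))
          = fun t : ℝ => nu (t • (-ξ.1)) *ᵥ (t • ξ.2.2.2.1) := by
        funext t
        rw [smul_neg]
      have hc := hasDerivAt_pi.mp (hceq ▸ hasDerivAt_nuVec (-ξ.1) ξ.2.2.2.1)
      have hqa := fun i => mulVec_const_deriv (M := (skew ξ.1)ᵀ) hqT χ.2.2.2.1 i
      refine hasDerivAt_pi.mpr fun i => ?_
      have hin : ∀ k, HasDerivAt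
          (fun t : ℝ => (nu (-(t • ξ.1)) *ᵥ (t • ξ.2.2.2.1)
            + (NormedSpace.exp (skew (t • ξ.1)))ᵀ *ᵥ χ.2.2.2.1) k)
          ((ξ.2.2.2.1 + (skew ξ.1)ᵀ *ᵥ χ.2.2.2.1) k) 0 := fun k => (hc k).add (hqa k)
      have h1 := hasDerivAt_mulVec_comp (A := χ.1ᵀᵀ) hin i
      have hb := (hasDerivAt_const (0:ℝ) ((-(χ.1 *ᵥ χ.2.2.2.1)) i)).fun_add h1
      convert hb using 1
      · rfl
      simp only [Pi.add_apply, Matrix.transpose_transpose, Matrix.mulVec_add,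
        skewT_mulVec]
      ring
    · -- b^ω block
      have hceq : (fun t : ℝ => nu (-(t • ξ.1)) *ᵥ (t • ξ.2.2.2.2))
          = fun t : ℝ => nu (t • (-ξ.1)) *ᵥ (t • ξ.2.2.2.2) := by
        funext t
        rw [smul_neg]
      have hc := hasDerivAt_pi.mp (hceq ▸ hasDerivAt_nuVec (-ξ.1) ξ.2.2.2.2)
      have hqa := fun i => mulVec_const_deriv (M := (skew ξ.1)ᵀ) hqT χ.2.2.2.2 i
      refine hasDerivAt_pi.mpr fun i => ?_
      have hin : ∀ k, HasDerivAt
          (fun t : ℝ => (nu (-(t • ξ.1)) *ᵥ (t • ξ.2.2.2.2)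
            + (NormedSpace.exp (skew (t • ξ.1)))ᵀ *ᵥ χ.2.2.2.2) k)
          ((ξ.2.2.2.2 + (skew ξ.1)ᵀ *ᵥ χ.2.2.2.2) k) 0 := fun k => (hc k).add (hqa k)
      have h1 := hasDerivAt_mulVec_comp (A := χ.1ᵀᵀ) hin i
      have hb := (hasDerivAt_const (0:ℝ) ((-(χ.1 *ᵥ χ.2.2.2.2)) i)).fun_add h1
      convert hb using 1
      · rfl
      simp only [Pi.add_apply, Matrix.transpose_transpose, Matrix.mulVec_add,
        skewT_mulVec]
      ring
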